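/- arXiv:1801.09976 — 4 statements merged into one kernel-verified Lean document; each statement's English description precedes it below -/
import Mathlib

section
/- Let A be a Noetherian commutative ring, g ∈ A[x_1, …, x_n] a polynomial of total degree d, and let 𝔭 ⊆ 𝔓 be prime ideals of A. If the image of g in Q(A/𝔭)[x_1, …, x_n] has total degree strictly smaller than d, or becomes reducible over a finite extension field of Q(A/𝔭), then the image of g in Q(A/𝔓)[x_1, …, x_n] has total degree strictly smaller than d, or is reducible over a finite extension field of Q(A/𝔓). -/
universe u

/-- A multivariate polynomial is reducible if it is a product of two non-units. -/
def MvPolyReducible {σ : Type*} {R : Type*} [CommRing R] (g : MvPolynomial σ R) : Prop :=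
  ∃ a b : MvPolynomial σ R, g = a * b ∧ ¬IsUnit a ∧ ¬IsUnit b

/-- The image of `g ∈ A[x₁,…,xₙ]` in `L[x₁,…,xₙ]`, where `L` is an extension field of the
fraction field `Q(A/𝔭)` of the quotient by a prime ideal `𝔭`. -/
noncomputable def reduceTo {A : Type u} [CommRing A] {n : ℕ} (p : Ideal A) [p.IsPrime]
    (L : Type u) [Field L] [Algebra (FractionRing (A ⧸ p)) L]
    (g : MvPolynomial (Fin n) A) : MvPolynomial (Fin n) L :=
  MvPolynomial.map
    ((algebraMap (FractionRing (A ⧸ p)) L).comp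
      ((algebraMap (A ⧸ p) (FractionRing (A ⧸ p))).comp (Ideal.Quotient.mk p))) g

namespace SpecAux

open MvPolynomial

variable {σ : Type*}

lemma totalDegree_le_of_support_le {R S : Type*} [CommSemiring R] [CommSemiring S]
    {p : MvPolynomial σ R} {q : MvPolynomial σ S}
    (h : ∀ m, m ∈ p.support → m ∈ q.support) : p.totalDegree ≤ q.totalDegree :=
  Finset.sup_le fun m hm => le_totalDegree (h m hm)

lemma totalDegree_map_le {R S : Type*} [CommSemiring R] [CommSemiring S] (f : R →+* S)
    (p : MvPolynomial σ R) : (map f p).totalDegree ≤ p.totalDegree :=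
  totalDegree_le_of_support_le fun _ hm => support_map_subset _ _ hm

lemma totalDegree_map_of_injective {R S : Type*} [CommSemiring R] [CommSemiring S] (f : R →+* S)
    (hf : Function.Injective f) (p : MvPolynomial σ R) :
    (map f p).totalDegree = p.totalDegree := by
  refine le_antisymm (totalDegree_map_le f p) (totalDegree_le_of_support_le fun m hm => ?_)
  rw [mem_support_iff] at hm ⊢
  rw [coeff_map]
  intro h0
  apply hm
  apply hf
  rw [h0, map_zero]

lemma exists_map_eq {S T : Type*} [CommRing S] [CommRing T] (ι : S →+* T)
    {f : MvPolynomial σ T} (hs : ∀ m, ∃ s, ι s = f.coeff m) :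
    ∃ f' : MvPolynomial σ S, map ι f' = f := by
  refine ⟨∑ m ∈ f.support, monomial m (hs m).choose, ?_⟩
  rw [map_sum]
  conv_rhs => rw [as_sum f]
  exact Finset.sum_congr rfl fun m _ => by rw [map_monomial, (hs m).choose_spec]

noncomputable def toPoly {R : Type*} [CommSemiring R] :
    MvPolynomial σ R →+* Polynomial (MvPolynomial σ R) :=
  eval₂Hom (Polynomial.C.comp MvPolynomial.C) fun i => Polynomial.C (MvPolynomial.X i) * Polynomial.X

lemma toPoly_monomial {R : Type*} [CommSemiring R] (m : σ →₀ ℕ) (c : R) :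
    toPoly (monomial m c) =
      Polynomial.C (monomial m c) * Polynomial.X ^ (m.sum fun _ e => e) := by
  classical
  rw [toPoly, coe_eval₂Hom, eval₂_monomial]
  rw [Finsupp.prod, Finsupp.sum]
  simp only [mul_pow, ← Polynomial.C_pow]
  rw [Finset.prod_mul_distrib, Finset.prod_pow_eq_pow_sum,
    ← map_prod (Polynomial.C : MvPolynomial σ R →+* Polynomial (MvPolynomial σ R))
      (fun x => X x ^ m x) m.support,
    RingHom.comp_apply, ← mul_assoc, ← Polynomial.C_mul, monomial_eq, Finsupp.prod]

lemma coeff_toPoly_of_lt {R : Type*} [CommSemiring R] {f : MvPolynomial σ R} {k : ℕ}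
    (hk : f.totalDegree < k) : (toPoly f).coeff k = 0 := by
  classical
  conv_lhs => rw [as_sum f, map_sum]
  rw [Polynomial.finset_sum_coeff]
  refine Finset.sum_eq_zero fun m hm => ?_
  rw [toPoly_monomial, Polynomial.coeff_C_mul, Polynomial.coeff_X_pow, if_neg, mul_zero]
  exact fun h => absurd (h ▸ le_totalDegree hm) (by omega)

lemma coeff_toPoly_totalDegree {R : Type*} [CommSemiring R] {f : MvPolynomial σ R} (hf : f ≠ 0) :
    (toPoly f).coeff f.totalDegree ≠ 0 := by
  classical
  obtain ⟨m₀, hm₀, hsup⟩ := Finset.exists_mem_eq_sup f.support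
    (support_nonempty.mpr hf) fun s => s.sum fun _ e => e
  set D := f.totalDegree with hDdef
  have hD : D = m₀.sum fun _ e => e := hsup
  intro h
  have key : MvPolynomial.coeff m₀ ((toPoly f).coeff D) = f.coeff m₀ := by
    conv_lhs => rw [as_sum f, map_sum, Polynomial.finset_sum_coeff]
    rw [MvPolynomial.coeff_sum]
    rw [Finset.sum_eq_single m₀]
    · rw [toPoly_monomial, Polynomial.coeff_C_mul, Polynomial.coeff_X_pow, if_pos hD,
        mul_one, coeff_monomial, if_pos rfl]
    · intro m hm hne
      rw [toPoly_monomial, Polynomial.coeff_C_mul, Polynomial.coeff_X_pow]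
      split
      · rw [mul_one, coeff_monomial, if_neg hne]
      · rw [mul_zero, coeff_zero]
    · intro h'; exact absurd hm₀ h'
  rw [h, coeff_zero] at key
  exact (mem_support_iff.mp hm₀) key.symm

lemma toPoly_ne_zero {R : Type*} [CommSemiring R] {f : MvPolynomial σ R} (hf : f ≠ 0) :
    toPoly f ≠ 0 := fun h => coeff_toPoly_totalDegree hf (by rw [h, Polynomial.coeff_zero])

lemma natDegree_toPoly {R : Type*} [CommSemiring R] {f : MvPolynomial σ R} (hf : f ≠ 0) :
    (toPoly f).natDegree = f.totalDegree :=
  le_antisymm (Polynomial.natDegree_le_iff_coeff_eq_zero.mpr fun _ h => coeff_toPoly_of_lt h)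
    (Polynomial.le_natDegree_of_ne_zero (coeff_toPoly_totalDegree hf))

lemma totalDegree_mul_eq {R : Type*} [CommRing R] [IsDomain R] {a b : MvPolynomial σ R}
    (ha : a ≠ 0) (hb : b ≠ 0) : (a * b).totalDegree = a.totalDegree + b.totalDegree := by
  have hab : a * b ≠ 0 := mul_ne_zero ha hb
  have := Polynomial.natDegree_mul (toPoly_ne_zero ha) (toPoly_ne_zero hb)
  rw [← map_mul, natDegree_toPoly hab, natDegree_toPoly ha, natDegree_toPoly hb] at this
  exact this

lemma totalDegree_eq_zero_of_isUnit {R : Type*} [CommRing R] [IsDomain R] {f : MvPolynomial σ R}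
    (hf : IsUnit f) : f.totalDegree = 0 := by
  obtain ⟨g, hg⟩ := hf.exists_right_inv
  have hf0 : f ≠ 0 := fun h => by simp [h] at hg
  have hg0 : g ≠ 0 := fun h => by simp [h] at hg
  have := totalDegree_mul_eq hf0 hg0
  rw [hg, totalDegree_one] at this
  omega

lemma isUnit_of_totalDegree_eq_zero {F : Type*} [Field F] {f : MvPolynomial σ F}
    (h0 : f ≠ 0) (h : f.totalDegree = 0) : IsUnit f := by
  classical
  have hfC : f = C (coeff 0 f) := by
    ext m
    rw [coeff_C]
    split
    · next heq => rw [← heq]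
    · next hne =>
      by_contra hc
      have hm : m ∈ f.support := mem_support_iff.mpr hc
      have := (totalDegree_eq_zero_iff σ f).mp h m hm
      exact hne (Finsupp.ext fun x => by simp [this x])
  have hc0 : coeff 0 f ≠ 0 := fun hcc => h0 (by rw [hfC, hcc, map_zero])
  rw [hfC]
  exact isUnit_iff_exists_inv.mpr ⟨C (coeff 0 f)⁻¹, by rw [← C_mul, mul_inv_cancel₀ hc0, C_1]⟩

lemma one_le_totalDegree_of_not_isUnit {F : Type*} [Field F] {f : MvPolynomial σ F}
    (h0 : f ≠ 0) (h : ¬IsUnit f) : 1 ≤ f.totalDegree := by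
  rcases Nat.eq_zero_or_pos f.totalDegree with he | hp
  · exact absurd (isUnit_of_totalDegree_eq_zero h0 he) h
  · exact hp

lemma not_isUnit_of_one_le_totalDegree {R : Type*} [CommRing R] [IsDomain R] {f : MvPolynomial σ R}
    (h : 1 ≤ f.totalDegree) : ¬IsUnit f :=
  fun hu => by have := totalDegree_eq_zero_of_isUnit hu; omega

end SpecAux

open MvPolynomial

set_option maxHeartbeats 1600000 in
set_option synthInstance.maxHeartbeats 200000 in
/-- Claim 1: specialization behaviour of reducibility. If `𝔭 ⊆ 𝔓` are primes of a
Noetherian ring `A` and the image of `g` in `Q(A/𝔭)[x]` has total degree `< d` or is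
reducible over a finite extension of `Q(A/𝔭)`, then the image of `g` in `Q(A/𝔓)[x]`
has total degree `< d` or is reducible over a finite extension of `Q(A/𝔓)`. -/
theorem reducibility_specializes {A : Type u} [CommRing A] [IsNoetherianRing A]
    {n : ℕ} (g : MvPolynomial (Fin n) A) (d : ℕ) (hd : g.totalDegree = d)
    (p P : Ideal A) [p.IsPrime] [P.IsPrime] (hpP : p ≤ P)
    (h : (reduceTo p (FractionRing (A ⧸ p)) g).totalDegree < d ∨
      ∃ (L : Type u) (_ : Field L) (_ : Algebra (FractionRing (A ⧸ p)) L)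
        (_ : FiniteDimensional (FractionRing (A ⧸ p)) L),
        MvPolyReducible (reduceTo p L g)) :
    (reduceTo P (FractionRing (A ⧸ P)) g).totalDegree < d ∨
      ∃ (L : Type u) (_ : Field L) (_ : Algebra (FractionRing (A ⧸ P)) L)
        (_ : FiniteDimensional (FractionRing (A ⧸ P)) L),
        MvPolyReducible (reduceTo P L g) := by
  classical
  -- normalized reductions mod P and mod p
  set q : MvPolynomial (Fin n) (FractionRing (A ⧸ P)) :=
    MvPolynomial.map ((algebraMap (A ⧸ P) (FractionRing (A ⧸ P))).comp (Ideal.Quotient.mk P)) g with hq_def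
  set qK : MvPolynomial (Fin n) (FractionRing (A ⧸ p)) :=
    MvPolynomial.map ((algebraMap (A ⧸ p) (FractionRing (A ⧸ p))).comp (Ideal.Quotient.mk p)) g with hqK_def
  have hq' : reduceTo P (FractionRing (A ⧸ P)) g = q := by
    unfold reduceTo
    rw [Algebra.algebraMap_self, RingHom.id_comp, hq_def]
  have hqK' : reduceTo p (FractionRing (A ⧸ p)) g = qK := by
    unfold reduceTo
    rw [Algebra.algebraMap_self, RingHom.id_comp, hqK_def]
  -- kernels of the coefficient maps
  have hkerP : ∀ x : A, (algebraMap (A ⧸ P) (FractionRing (A ⧸ P))) (Ideal.Quotient.mk P x) = 0 ↔ x ∈ P := by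
    intro x
    constructor
    · intro hx
      exact Ideal.Quotient.eq_zero_iff_mem.mp
        (IsFractionRing.injective (A ⧸ P) (FractionRing (A ⧸ P)) (by rw [hx, map_zero]))
    · intro hx
      rw [Ideal.Quotient.eq_zero_iff_mem.mpr hx, map_zero]
  have hkerp : ∀ x : A, (algebraMap (A ⧸ p) (FractionRing (A ⧸ p))) (Ideal.Quotient.mk p x) = 0 ↔ x ∈ p := by
    intro x
    constructor
    · intro hx
      exact Ideal.Quotient.eq_zero_iff_mem.mp
        (IsFractionRing.injective (A ⧸ p) (FractionRing (A ⧸ p)) (by rw [hx, map_zero]))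
    · intro hx
      rw [Ideal.Quotient.eq_zero_iff_mem.mpr hx, map_zero]
  have hsuppq : ∀ m, m ∈ q.support ↔ g.coeff m ∉ P := by
    intro m
    rw [hq_def, mem_support_iff, coeff_map, RingHom.comp_apply]
    exact not_congr (hkerP _)
  have hsuppqK : ∀ m, m ∈ qK.support ↔ g.coeff m ∉ p := by
    intro m
    rw [hqK_def, mem_support_iff, coeff_map, RingHom.comp_apply]
    exact not_congr (hkerp _)
  have hqled : q.totalDegree ≤ d := by
    rw [← hd]
    refine SpecAux.totalDegree_le_of_support_le fun m hm => ?_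
    rw [mem_support_iff]
    intro h0
    exact (hsuppq m).mp hm (h0 ▸ P.zero_mem)
  have hq_le_qK : q.totalDegree ≤ qK.totalDegree := by
    refine SpecAux.totalDegree_le_of_support_le fun m hm => ?_
    exact (hsuppqK m).mpr fun hp' => (hsuppq m).mp hm (hpP hp')
  rcases h with h1 | ⟨L, _fL, _aL, _fdL, a, b, hab, hua, hub⟩
  · left
    rw [hq']
    rw [hqK'] at h1
    exact lt_of_le_of_lt hq_le_qK h1
  by_cases hPlt : (reduceTo P (FractionRing (A ⧸ P)) g).totalDegree < d
  · exact Or.inl hPlt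
  right
  rw [hq'] at hPlt
  have hqd : q.totalDegree = d := le_antisymm hqled (not_lt.mp hPlt)
  by_cases hd0 : d = 0
  · subst hd0
    by_cases hq0 : q = 0
    · exact ⟨(FractionRing (A ⧸ P)), inferInstance, Algebra.id (FractionRing (A ⧸ P)), inferInstance, 0, 0,
        by rw [hq', hq0, mul_zero], not_isUnit_zero, not_isUnit_zero⟩
    · exfalso
      obtain ⟨m, hm⟩ := MvPolynomial.ne_zero_iff.mp hq0
      have hgm : g.coeff m ∉ p := fun hp' => (hsuppq m).mp (mem_support_iff.mpr hm) (hpP hp')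
      have h0 : reduceTo p L g ≠ 0 := by
        intro hz
        have hz' := congrArg (MvPolynomial.coeff m) hz
        simp only [reduceTo] at hz'
        rw [coeff_map, coeff_zero, RingHom.comp_apply, RingHom.comp_apply] at hz'
        have : (algebraMap (A ⧸ p) (FractionRing (A ⧸ p))) (Ideal.Quotient.mk p (g.coeff m)) = 0 :=
          (algebraMap (FractionRing (A ⧸ p)) L).injective (by rw [hz', map_zero])
        exact hgm ((hkerp _).mp this)
      have hdeg : (reduceTo p L g).totalDegree = 0 := by
        have := SpecAux.totalDegree_map_le
          ((algebraMap (FractionRing (A ⧸ p)) L).comp ((algebraMap (A ⧸ p) (FractionRing (A ⧸ p))).comp (Ideal.Quotient.mk p))) g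
        rw [← reduceTo] at this
        omega
      have := SpecAux.isUnit_of_totalDegree_eq_zero h0 hdeg
      rw [hab] at this
      exact hua (isUnit_of_mul_isUnit_left this)
  have hd1 : 1 ≤ d := Nat.one_le_iff_ne_zero.mpr hd0
  -- the algebraically closed extension of (FractionRing (A ⧸ p))
  haveI : Algebra.IsAlgebraic (FractionRing (A ⧸ p)) L := Algebra.IsAlgebraic.of_finite (FractionRing (A ⧸ p)) L
  let χ : L →ₐ[(FractionRing (A ⧸ p))] (AlgebraicClosure (FractionRing (A ⧸ p))) := IsAlgClosed.lift
  -- the prime P' = P/p of A/p and the valuation ring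
  set P' : Ideal (A ⧸ p) := P.map (Ideal.Quotient.mk p) with hP'def
  haveI hP'p : P'.IsPrime :=
    Ideal.map_isPrime_of_surjective Ideal.Quotient.mk_surjective
      (by rw [Ideal.mk_ker]; exact hpP)
  set gBΩ : (A ⧸ p) →+* (AlgebraicClosure (FractionRing (A ⧸ p))) := (algebraMap (FractionRing (A ⧸ p)) (AlgebraicClosure (FractionRing (A ⧸ p)))).comp (algebraMap (A ⧸ p) (FractionRing (A ⧸ p))) with hgBΩdef
  have hunits : ∀ y : P'.primeCompl, IsUnit (gBΩ y) := by
    rintro ⟨y, hy⟩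
    apply isUnit_iff_ne_zero.mpr
    intro h0
    apply hy
    have : (algebraMap (A ⧸ p) (FractionRing (A ⧸ p))) y = 0 := (algebraMap (FractionRing (A ⧸ p)) (AlgebraicClosure (FractionRing (A ⧸ p)))).injective (by
      rw [← RingHom.comp_apply, ← hgBΩdef, h0, map_zero])
    have hy0 : y = 0 := IsFractionRing.injective (A ⧸ p) (FractionRing (A ⧸ p)) (by rw [this, map_zero])
    rw [hy0]
    exact P'.zero_mem
  set f : (Localization.AtPrime P') →+* (AlgebraicClosure (FractionRing (A ⧸ p))) := IsLocalization.lift (M := P'.primeCompl) (S := (Localization.AtPrime P')) hunits with hfdef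
  obtain ⟨V, hV, hVloc⟩ := IsLocalRing.exists_factor_valuationRing f
  haveI : IsLocalRing ↥V.toSubring := V.isLocalRing
  set f' : (Localization.AtPrime P') →+* ↥V.toSubring := f.codRestrict V.toSubring hV with hf'def
  set res : ↥V.toSubring →+* (IsLocalRing.ResidueField ↥V.toSubring) := IsLocalRing.residue _ with hresdef
  set ι : ↥V.toSubring →+* (AlgebraicClosure (FractionRing (A ⧸ p))) := V.toSubring.subtype with hιdef
  have hιinj : Function.Injective ι := Subtype.coe_injective
  have hres0 : ∀ y : ↥V.toSubring, res y = 0 ↔ ¬ IsUnit y := by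
    intro y
    constructor
    · intro hy hu
      exact (IsLocalRing.mem_maximalIdeal y).mp (Ideal.Quotient.eq_zero_iff_mem.mp hy) hu
    · intro hy
      exact Ideal.Quotient.eq_zero_iff_mem.mpr ((IsLocalRing.mem_maximalIdeal y).mpr hy)
  set φ₀ : A →+* ↥V.toSubring :=
    f'.comp ((algebraMap (A ⧸ p) (Localization.AtPrime P')).comp (Ideal.Quotient.mk p)) with hφ₀def
  set ψ : A →+* (IsLocalRing.ResidueField ↥V.toSubring) := res.comp φ₀ with hψdef
  set ρ : A →+* (AlgebraicClosure (FractionRing (A ⧸ p))) := gBΩ.comp (Ideal.Quotient.mk p) with hρdef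
  have hιf' : ι.comp f' = f := RingHom.ext fun x => rfl
  have hfρ : f.comp ((algebraMap (A ⧸ p) (Localization.AtPrime P')).comp (Ideal.Quotient.mk p)) = ρ := by
    rw [← RingHom.comp_assoc, hfdef, IsLocalization.lift_comp, hρdef]
  have hιφ : ι.comp φ₀ = ρ := by
    rw [hφ₀def, ← RingHom.comp_assoc, hιf', hfρ]
  -- kernel of ψ is exactly P
  have hψker : ∀ x : A, ψ x = 0 ↔ x ∈ P := by
    intro x
    rw [hψdef, RingHom.comp_apply, hres0]
    have hloc : IsUnit (φ₀ x) ↔ IsUnit ((algebraMap (A ⧸ p) (Localization.AtPrime P')) (Ideal.Quotient.mk p x)) := by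
      constructor
      · intro hu
        exact hVloc.1 _ hu
      · intro hu
        exact hu.map f'
    rw [hloc, IsLocalization.AtPrime.isUnit_to_map_iff (Localization.AtPrime P') P' (Ideal.Quotient.mk p x)]
    constructor
    · intro hx
      have hmem : Ideal.Quotient.mk p x ∈ P' := not_not.mp hx
      exact (Ideal.mem_quotient_iff_mem hpP).mp hmem
    · intro hxP hc
      exact hc ((Ideal.mem_quotient_iff_mem hpP).mpr hxP)
  -- the embedding of (FractionRing (A ⧸ P)) into kappa
  have hker' : ∀ x ∈ P, ψ x = 0 := fun x hx => (hψker x).mpr hx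
  set ψb : (A ⧸ P) →+* (IsLocalRing.ResidueField ↥V.toSubring) := Ideal.Quotient.lift P ψ hker' with hψbdef
  have hψbinj : Function.Injective ψb := by
    refine (injective_iff_map_eq_zero ψb).mpr ?_
    intro z hz
    obtain ⟨x, rfl⟩ := Ideal.Quotient.mk_surjective z
    rw [hψbdef, Ideal.Quotient.lift_mk] at hz
    exact Ideal.Quotient.eq_zero_iff_mem.mpr ((hψker x).mp hz)
  set ω : (FractionRing (A ⧸ P)) →+* (IsLocalRing.ResidueField ↥V.toSubring) := IsFractionRing.lift hψbinj with hωdef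
  have hωinj : Function.Injective ω := ω.injective
  have hcomm : ω.comp ((algebraMap (A ⧸ P) (FractionRing (A ⧸ P))).comp (Ideal.Quotient.mk P)) = ψ := by
    ext x
    rw [RingHom.comp_apply, RingHom.comp_apply, hωdef, IsFractionRing.lift_algebraMap, hψbdef,
      Ideal.Quotient.lift_mk]
  have hmapq : MvPolynomial.map ω q = MvPolynomial.map ψ g := by
    rw [hq_def, map_map, hcomm]
  -- the Omega-side picture
  set gΩ : MvPolynomial (Fin n) (AlgebraicClosure (FractionRing (A ⧸ p))) := MvPolynomial.map ρ g with hgΩdef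
  have hhom : (χ.toRingHom).comp
      ((algebraMap (FractionRing (A ⧸ p)) L).comp ((algebraMap (A ⧸ p) (FractionRing (A ⧸ p))).comp (Ideal.Quotient.mk p))) = ρ := by
    ext x
    simp [hρdef, hgBΩdef, χ.commutes]
  have hχg : MvPolynomial.map χ.toRingHom (reduceTo p L g) = gΩ := by
    simp only [reduceTo]
    rw [map_map, hhom, hgΩdef]
  have hρker : ∀ x : A, ρ x = 0 ↔ x ∈ p := by
    intro x
    rw [hρdef, RingHom.comp_apply, hgBΩdef, RingHom.comp_apply]
    constructor
    · intro h0
      exact (hkerp x).mp ((algebraMap (FractionRing (A ⧸ p)) (AlgebraicClosure (FractionRing (A ⧸ p)))).injective (by rw [h0, map_zero]))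
    · intro h0
      have h2 := (hkerp x).mpr h0
      rw [h2, map_zero]
  have hsuppgΩ : ∀ m, m ∈ gΩ.support ↔ g.coeff m ∉ p := fun m => by
    rw [hgΩdef, mem_support_iff, coeff_map]
    exact not_congr (hρker _)
  have hgΩd : gΩ.totalDegree = d := by
    refine le_antisymm ?_ ?_
    · rw [← hd]
      refine SpecAux.totalDegree_le_of_support_le fun m hm => ?_
      rw [mem_support_iff]
      exact fun h0 => (hsuppgΩ m).mp hm (h0 ▸ p.zero_mem)
    · rw [← hqd]
      refine SpecAux.totalDegree_le_of_support_le fun m hm => ?_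
      exact (hsuppgΩ m).mpr fun hp' => (hsuppq m).mp hm (hpP hp')
  have hgΩ0 : gΩ ≠ 0 := by
    intro h0
    rw [h0, totalDegree_zero] at hgΩd
    omega
  set aΩ := MvPolynomial.map χ.toRingHom a with haΩdef
  set bΩ := MvPolynomial.map χ.toRingHom b with hbΩdef
  have hχinj : Function.Injective χ.toRingHom := χ.toRingHom.injective
  have hgab : gΩ = aΩ * bΩ := by rw [← hχg, hab, map_mul]
  have haΩ0 : aΩ ≠ 0 := fun h0 => hgΩ0 (by rw [hgab, h0, zero_mul])
  have hbΩ0 : bΩ ≠ 0 := fun h0 => hgΩ0 (by rw [hgab, h0, mul_zero])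
  have ha0 : a ≠ 0 := fun h0 => haΩ0 (by rw [haΩdef, h0, map_zero])
  have hb0 : b ≠ 0 := fun h0 => hbΩ0 (by rw [hbΩdef, h0, map_zero])
  have haΩu : ¬IsUnit aΩ := by
    intro hu
    apply hua
    refine SpecAux.isUnit_of_totalDegree_eq_zero ha0 ?_
    rw [← SpecAux.totalDegree_map_of_injective χ.toRingHom hχinj a, ← haΩdef,
      SpecAux.totalDegree_eq_zero_of_isUnit hu]
  have hbΩu : ¬IsUnit bΩ := by
    intro hu
    apply hub
    refine SpecAux.isUnit_of_totalDegree_eq_zero hb0 ?_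
    rw [← SpecAux.totalDegree_map_of_injective χ.toRingHom hχinj b, ← hbΩdef,
      SpecAux.totalDegree_eq_zero_of_isUnit hu]
  have h1a : 1 ≤ aΩ.totalDegree := SpecAux.one_le_totalDegree_of_not_isUnit haΩ0 haΩu
  have h1b : 1 ≤ bΩ.totalDegree := SpecAux.one_le_totalDegree_of_not_isUnit hbΩ0 hbΩu
  have hsumab : aΩ.totalDegree + bΩ.totalDegree = d := by
    rw [← SpecAux.totalDegree_mul_eq haΩ0 hbΩ0, ← hgab, hgΩd]
  -- normalize a
  obtain ⟨ma, hma_mem, hma_max⟩ := Finset.exists_max_image aΩ.support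
    (fun m => V.valuation (aΩ.coeff m)) (support_nonempty.mpr haΩ0)
  set c := aΩ.coeff ma with hcdef
  have hc0 : c ≠ 0 := mem_support_iff.mp hma_mem
  set a' := MvPolynomial.C c⁻¹ * aΩ with ha'def
  have ha'mem : ∀ m, ∃ s : ↥V.toSubring, ι s = a'.coeff m := by
    intro m
    rw [ha'def, coeff_C_mul]
    by_cases hm : aΩ.coeff m = 0
    · exact ⟨0, by rw [map_zero, hm, mul_zero]⟩
    · have hle : V.valuation (aΩ.coeff m) ≤ V.valuation c := hma_max m (mem_support_iff.mpr hm)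
      obtain ⟨s, hs⟩ := (V.valuation_le_iff _ _).mp hle
      refine ⟨⟨(s : (AlgebraicClosure (FractionRing (A ⧸ p)))), s.2⟩, ?_⟩
      show (s : (AlgebraicClosure (FractionRing (A ⧸ p)))) = c⁻¹ * aΩ.coeff m
      rw [← hs]
      field_simp
  obtain ⟨A', hA'⟩ := SpecAux.exists_map_eq ι ha'mem
  have hA'ma : A'.coeff ma = 1 := by
    have h1 : a'.coeff ma = 1 := by rw [ha'def, coeff_C_mul, ← hcdef, inv_mul_cancel₀ hc0]
    have h2 := congrArg (MvPolynomial.coeff ma) hA'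
    rw [coeff_map, h1] at h2
    exact hιinj (by rw [h2, map_one])
  -- normalize b
  obtain ⟨mb, hmb_mem, hmb_max⟩ := Finset.exists_max_image bΩ.support
    (fun m => V.valuation (bΩ.coeff m)) (support_nonempty.mpr hbΩ0)
  set e := bΩ.coeff mb with hedef
  have he0 : e ≠ 0 := mem_support_iff.mp hmb_mem
  set b' := MvPolynomial.C e⁻¹ * bΩ with hb'def
  have hb'mem : ∀ m, ∃ s : ↥V.toSubring, ι s = b'.coeff m := by
    intro m
    rw [hb'def, coeff_C_mul]
    by_cases hm : bΩ.coeff m = 0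
    · exact ⟨0, by rw [map_zero, hm, mul_zero]⟩
    · have hle : V.valuation (bΩ.coeff m) ≤ V.valuation e := hmb_max m (mem_support_iff.mpr hm)
      obtain ⟨s, hs⟩ := (V.valuation_le_iff _ _).mp hle
      refine ⟨⟨(s : (AlgebraicClosure (FractionRing (A ⧸ p)))), s.2⟩, ?_⟩
      show (s : (AlgebraicClosure (FractionRing (A ⧸ p)))) = e⁻¹ * bΩ.coeff m
      rw [← hs]
      field_simp
  obtain ⟨B', hB'⟩ := SpecAux.exists_map_eq ι hb'mem
  have hB'mb : B'.coeff mb = 1 := by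
    have h1 : b'.coeff mb = 1 := by rw [hb'def, coeff_C_mul, ← hedef, inv_mul_cancel₀ he0]
    have h2 := congrArg (MvPolynomial.coeff mb) hB'
    rw [coeff_map, h1] at h2
    exact hιinj (by rw [h2, map_one])
  -- reductions of the factors
  set Ar := MvPolynomial.map res A' with hArdef
  set Br := MvPolynomial.map res B' with hBrdef
  have hAr0 : Ar ≠ 0 := by
    intro h0
    have h2 := congrArg (MvPolynomial.coeff ma) h0
    rw [hArdef, coeff_map, hA'ma, map_one, coeff_zero] at h2
    exact one_ne_zero h2
  have hBr0 : Br ≠ 0 := by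
    intro h0
    have h2 := congrArg (MvPolynomial.coeff mb) h0
    rw [hBrdef, coeff_map, hB'mb, map_one, coeff_zero] at h2
    exact one_ne_zero h2
  have hABr0 : Ar * Br ≠ 0 := mul_ne_zero hAr0 hBr0
  obtain ⟨m₁, hm₁⟩ := MvPolynomial.ne_zero_iff.mp hABr0
  set w := (A' * B').coeff m₁ with hwdef
  have hm₁' : res w ≠ 0 := by
    have hmul : Ar * Br = MvPolynomial.map res (A' * B') := by
      rw [map_mul, hArdef, hBrdef]
    rw [hmul, coeff_map] at hm₁
    exact hm₁
  have hw : IsUnit w := by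
    by_contra hnu
    exact hm₁' ((hres0 _).mpr hnu)
  -- the master factorization over Omega
  have hfact : gΩ = MvPolynomial.C (c * e) * (a' * b') := by
    have hcc : (MvPolynomial.C c : MvPolynomial (Fin n) (AlgebraicClosure (FractionRing (A ⧸ p)))) * MvPolynomial.C c⁻¹ = 1 := by
      rw [← MvPolynomial.C_mul, mul_inv_cancel₀ hc0, MvPolynomial.C_1]
    have hee : (MvPolynomial.C e : MvPolynomial (Fin n) (AlgebraicClosure (FractionRing (A ⧸ p)))) * MvPolynomial.C e⁻¹ = 1 := by
      rw [← MvPolynomial.C_mul, mul_inv_cancel₀ he0, MvPolynomial.C_1]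
    rw [hgab, ha'def, hb'def, MvPolynomial.C_mul]
    calc aΩ * bΩ
        = ((MvPolynomial.C c * MvPolynomial.C c⁻¹) * aΩ) *
            ((MvPolynomial.C e * MvPolynomial.C e⁻¹) * bΩ) := by rw [hcc, hee]; ring
      _ = MvPolynomial.C c * MvPolynomial.C e *
            (MvPolynomial.C c⁻¹ * aΩ * (MvPolynomial.C e⁻¹ * bΩ)) := by ring
  set G' := MvPolynomial.map φ₀ g with hG'def
  have hιG' : MvPolynomial.map ι G' = gΩ := by rw [hG'def, map_map, hιφ, hgΩdef]
  have hιA'B' : MvPolynomial.map ι (A' * B') = a' * b' := by rw [map_mul, hA', hB']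
  have hcoeff : ι (G'.coeff m₁) = (c * e) * ι w := by
    have h2 := congrArg (MvPolynomial.coeff m₁) hιG'
    rw [coeff_map] at h2
    have h3 := congrArg (MvPolynomial.coeff m₁) hιA'B'
    rw [coeff_map] at h3
    rw [h2, hfact, coeff_C_mul, ← h3, hwdef]
  set t : ↥V.toSubring := G'.coeff m₁ * ↑hw.unit⁻¹ with htdef
  have hιt : ι t = c * e := by
    have hmain : ι ((hw.unit⁻¹ : (↥V.toSubring)ˣ) : ↥V.toSubring) * ι w = 1 := by
      calc ι ((hw.unit⁻¹ : (↥V.toSubring)ˣ) : ↥V.toSubring) * ι w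
          = ι (↑hw.unit⁻¹ * w) := (map_mul ι _ _).symm
        _ = ι (↑hw.unit⁻¹ * ↑hw.unit) := by rw [IsUnit.unit_spec]
        _ = ι 1 := by rw [Units.inv_mul]
        _ = 1 := map_one ι
    rw [htdef, map_mul, hcoeff]
    calc (c * e) * ι w * ι ((hw.unit⁻¹ : (↥V.toSubring)ˣ) : ↥V.toSubring)
        = (c * e) * (ι ((hw.unit⁻¹ : (↥V.toSubring)ˣ) : ↥V.toSubring) * ι w) := by ring
      _ = c * e := by rw [hmain, mul_one]
  have hG'eq : G' = MvPolynomial.C t * (A' * B') := by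
    apply MvPolynomial.map_injective ι hιinj
    rw [map_mul, MvPolynomial.map_C, hιt, hιA'B', hιG', hfact]
  have hκ : MvPolynomial.map ω q = MvPolynomial.C (res t) * (Ar * Br) := by
    rw [hmapq]
    have hψres : MvPolynomial.map ψ g = MvPolynomial.map res G' := by
      rw [hG'def, map_map, hψdef]
    rw [hψres, hG'eq, map_mul]
    congr 1
    · exact MvPolynomial.map_C res t
    · rw [map_mul, hArdef, hBrdef]
  set α := MvPolynomial.C (res t) * Ar with hαdef
  have hαβ : MvPolynomial.map ω q = α * Br := by rw [hκ, hαdef, mul_assoc]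
  have hmapqd : (MvPolynomial.map ω q).totalDegree = d := by
    rw [SpecAux.totalDegree_map_of_injective ω hωinj, hqd]
  have hArd : Ar.totalDegree ≤ aΩ.totalDegree := by
    calc Ar.totalDegree ≤ A'.totalDegree := SpecAux.totalDegree_map_le _ _
      _ = a'.totalDegree := by rw [← hA', SpecAux.totalDegree_map_of_injective ι hιinj]
      _ ≤ aΩ.totalDegree := by
          rw [ha'def]
          refine le_trans (totalDegree_mul _ _) ?_
          rw [totalDegree_C, zero_add]
  have hαd : α.totalDegree ≤ aΩ.totalDegree := by
    rw [hαdef]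
    refine le_trans (totalDegree_mul _ _) ?_
    rw [totalDegree_C, zero_add]
    exact hArd
  have hβd : Br.totalDegree ≤ bΩ.totalDegree := by
    calc Br.totalDegree ≤ B'.totalDegree := SpecAux.totalDegree_map_le _ _
      _ = b'.totalDegree := by rw [← hB', SpecAux.totalDegree_map_of_injective ι hιinj]
      _ ≤ bΩ.totalDegree := by
          rw [hb'def]
          refine le_trans (totalDegree_mul _ _) ?_
          rw [totalDegree_C, zero_add]
  have hlow : d ≤ α.totalDegree + Br.totalDegree := by
    rw [← hmapqd, hαβ]
    exact totalDegree_mul α Br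
  -- now descend to a finite extension of (FractionRing (A ⧸ P))
  letI : Algebra (FractionRing (A ⧸ P)) (IsLocalRing.ResidueField ↥V.toSubring) := ω.toAlgebra
  have hωalg : algebraMap (FractionRing (A ⧸ P)) (IsLocalRing.ResidueField ↥V.toSubring) = ω := rfl
  set t0 : Finset (IsLocalRing.ResidueField ↥V.toSubring) :=
    α.support.image (fun m => α.coeff m) ∪ Br.support.image (fun m => Br.coeff m) with ht0def
  set R₀ : Subalgebra (FractionRing (A ⧸ P)) (IsLocalRing.ResidueField ↥V.toSubring) := Algebra.adjoin (FractionRing (A ⧸ P)) (t0 : Set (IsLocalRing.ResidueField ↥V.toSubring)) with hR₀def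
  have hmemα : ∀ m, ∃ s : ↥R₀, algebraMap R₀ (IsLocalRing.ResidueField ↥V.toSubring) s = α.coeff m := by
    intro m
    by_cases hm : α.coeff m = 0
    · exact ⟨0, by rw [map_zero, hm]⟩
    · refine ⟨⟨α.coeff m, Algebra.subset_adjoin ?_⟩, rfl⟩
      exact Finset.mem_coe.mpr (Finset.mem_union_left _
        (Finset.mem_image.mpr ⟨m, mem_support_iff.mpr hm, rfl⟩))
  have hmemβ : ∀ m, ∃ s : ↥R₀, algebraMap R₀ (IsLocalRing.ResidueField ↥V.toSubring) s = Br.coeff m := by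
    intro m
    by_cases hm : Br.coeff m = 0
    · exact ⟨0, by rw [map_zero, hm]⟩
    · refine ⟨⟨Br.coeff m, Algebra.subset_adjoin ?_⟩, rfl⟩
      exact Finset.mem_coe.mpr (Finset.mem_union_right _
        (Finset.mem_image.mpr ⟨m, mem_support_iff.mpr hm, rfl⟩))
  obtain ⟨α₁, hα₁⟩ := SpecAux.exists_map_eq (algebraMap R₀ (IsLocalRing.ResidueField ↥V.toSubring)) hmemα
  obtain ⟨β₁, hβ₁⟩ := SpecAux.exists_map_eq (algebraMap R₀ (IsLocalRing.ResidueField ↥V.toSubring)) hmemβ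
  have hvalinj : Function.Injective (algebraMap R₀ (IsLocalRing.ResidueField ↥V.toSubring)) := fun x y hxy => Subtype.ext hxy
  have htower : (algebraMap R₀ (IsLocalRing.ResidueField ↥V.toSubring)).comp (algebraMap (FractionRing (A ⧸ P)) R₀) = algebraMap (FractionRing (A ⧸ P)) (IsLocalRing.ResidueField ↥V.toSubring) :=
    (IsScalarTower.algebraMap_eq (FractionRing (A ⧸ P)) R₀ (IsLocalRing.ResidueField ↥V.toSubring)).symm
  have hre : α₁ * β₁ = MvPolynomial.map (algebraMap (FractionRing (A ⧸ P)) R₀) q := by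
    apply MvPolynomial.map_injective (algebraMap R₀ (IsLocalRing.ResidueField ↥V.toSubring)) hvalinj
    rw [map_mul, hα₁, hβ₁, map_map, htower, hωalg, hαβ]
  haveI : Nontrivial ↥R₀ := nontrivial_of_ne 1 0 fun h0 =>
    one_ne_zero (α := (IsLocalRing.ResidueField ↥V.toSubring)) (by simpa using congrArg (algebraMap R₀ (IsLocalRing.ResidueField ↥V.toSubring)) h0)
  obtain ⟨M, hM⟩ := Ideal.exists_maximal ↥R₀
  haveI := hM
  letI instLField : Field (↥R₀ ⧸ M) := Ideal.Quotient.field M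
  haveI hft : Algebra.FiniteType (FractionRing (A ⧸ P)) ↥R₀ :=
    (Subalgebra.fg_iff_finiteType R₀).mp (hR₀def ▸ Subalgebra.fg_adjoin_finset t0)
  haveI : Algebra.FiniteType (FractionRing (A ⧸ P)) (↥R₀ ⧸ M) :=
    Algebra.FiniteType.of_surjective (Ideal.Quotient.mkₐ (FractionRing (A ⧸ P)) M)
      (Ideal.Quotient.mkₐ_surjective (FractionRing (A ⧸ P)) M)
  haveI : Module.Finite (FractionRing (A ⧸ P)) (↥R₀ ⧸ M) := finite_of_finite_type_of_isJacobsonRing (FractionRing (A ⧸ P)) (↥R₀ ⧸ M)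
  have hquotalg : algebraMap (FractionRing (A ⧸ P)) (↥R₀ ⧸ M) = (Ideal.Quotient.mk M).comp (algebraMap (FractionRing (A ⧸ P)) R₀) :=
    RingHom.ext fun x => rfl
  set α₂ := MvPolynomial.map (Ideal.Quotient.mk M) α₁ with hα₂def
  set β₂ := MvPolynomial.map (Ideal.Quotient.mk M) β₁ with hβ₂def
  have hfinal : MvPolynomial.map (algebraMap (FractionRing (A ⧸ P)) (↥R₀ ⧸ M)) q = α₂ * β₂ := by
    rw [hquotalg, ← map_map, ← hre, map_mul, hα₂def, hβ₂def]
  have hLinj : Function.Injective (algebraMap (FractionRing (A ⧸ P)) (↥R₀ ⧸ M)) :=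
    (algebraMap (FractionRing (A ⧸ P)) (↥R₀ ⧸ M)).injective
  have hqLd : (MvPolynomial.map (algebraMap (FractionRing (A ⧸ P)) (↥R₀ ⧸ M)) q).totalDegree = d := by
    rw [SpecAux.totalDegree_map_of_injective _ hLinj, hqd]
  have hα₂le : α₂.totalDegree ≤ α.totalDegree := by
    calc α₂.totalDegree ≤ α₁.totalDegree := SpecAux.totalDegree_map_le _ _
      _ = α.totalDegree := by rw [← hα₁, SpecAux.totalDegree_map_of_injective _ hvalinj]
  have hβ₂le : β₂.totalDegree ≤ Br.totalDegree := by
    calc β₂.totalDegree ≤ β₁.totalDegree := SpecAux.totalDegree_map_le _ _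
      _ = Br.totalDegree := by rw [← hβ₁, SpecAux.totalDegree_map_of_injective _ hvalinj]
  have hlow2 : d ≤ α₂.totalDegree + β₂.totalDegree := by
    rw [← hqLd, hfinal]
    exact totalDegree_mul _ _
  have h1α₂ : 1 ≤ α₂.totalDegree := by omega
  have h1β₂ : 1 ≤ β₂.totalDegree := by omega
  refine ⟨↥R₀ ⧸ M, instLField, inferInstance, inferInstance, α₂, β₂, ?_,
    SpecAux.not_isUnit_of_one_le_totalDegree h1α₂,
    SpecAux.not_isUnit_of_one_le_totalDegree h1β₂⟩
  simp only [reduceTo]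
  rw [← hfinal, hq_def, map_map]
end

section
/- Let M(b_11, b_12) be the symmetric 5×5 matrix whose (1,1) entry is b_11, whose (i,j) entries for |i−j| ≤ 1 and (i,j) ≠ (1,1) are all b_12, and whose remaining entries are 0. Then the polynomial g(λ, b_11) := det(λ·Id_5 + M(b_11, 1)) ∈ ℚ[λ, b_11], obtained by setting b_12 = 1, is irreducible of total degree five over the algebraic closure ℚ̄ of ℚ. -/
open MvPolynomial

/-- An algebraic closure of `ℚ`. -/
noncomputable abbrev Qbar : Type := AlgebraicClosure ℚ

/-- The symmetric `5×5` matrix `M(b₁₁, b₁₂)` with `(1,1)` entry `b₁₁`, entries `b₁₂` at all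
positions `(i,j) ≠ (1,1)` with `|i - j| ≤ 1`, and `0` elsewhere (0-based indices), here
specialized at `b₁₂ = 1` with `b₁₁` the variable `X 1` of `ℚ[λ, b₁₁]`. -/
noncomputable def M7 : Matrix (Fin 5) (Fin 5) (MvPolynomial (Fin 2) ℚ) :=
  Matrix.of fun i j =>
    if i = 0 ∧ j = 0 then X 1
    else if (i : ℕ) ≤ (j : ℕ) + 1 ∧ (j : ℕ) ≤ (i : ℕ) + 1 then 1 else 0

/-- The polynomial `g(λ, b₁₁) = det(λ·Id₅ + M(b₁₁, 1)) ∈ ℚ[λ, b₁₁]`, where `λ` is the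
variable `X 0` and `b₁₁` is the variable `X 1`. -/
noncomputable def g7 : MvPolynomial (Fin 2) ℚ :=
  Matrix.det
    ((X 0 : MvPolynomial (Fin 2) ℚ) • (1 : Matrix (Fin 5) (Fin 5) (MvPolynomial (Fin 2) ℚ)) +
      M7)

set_option maxHeartbeats 2000000 in
lemma g7_eq : g7 = 1 - X 1 - 2*X 0 - 2*X 0*X 1 - 5*(X 0)^2 + 3*(X 0)^2*X 1
    + 2*(X 0)^3 + 4*(X 0)^3*X 1 + 4*(X 0)^4 + (X 0)^4*X 1 + (X 0)^5 := by
  have hM : (X 0 : MvPolynomial (Fin 2) ℚ) • (1 : Matrix (Fin 5) (Fin 5) (MvPolynomial (Fin 2) ℚ)) + M7 =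
      !![X 0 + X 1, 1, 0, 0, 0; 1, X 0 + 1, 1, 0, 0; 0, 1, X 0 + 1, 1, 0;
         0, 0, 1, X 0 + 1, 1; 0, 0, 0, 1, X 0 + 1] := by
    ext i j
    fin_cases i <;> fin_cases j <;>
      simp [M7, Matrix.one_apply, Matrix.smul_apply] <;> rfl
  rw [g7, hM]
  simp [Matrix.det_succ_row_zero, Fin.sum_univ_succ, Fin.succAbove]
  ring

/-- The image of `g7` over `Qbar`, written explicitly. -/
noncomputable def G : MvPolynomial (Fin 2) Qbar :=
  C 1 * X 0 ^ 0 * X 1 ^ 0 + C (-1) * X 0 ^ 0 * X 1 ^ 1 + C (-2) * X 0 ^ 1 * X 1 ^ 0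
  + C (-2) * X 0 ^ 1 * X 1 ^ 1 + C (-5) * X 0 ^ 2 * X 1 ^ 0 + C 3 * X 0 ^ 2 * X 1 ^ 1
  + C 2 * X 0 ^ 3 * X 1 ^ 0 + C 4 * X 0 ^ 3 * X 1 ^ 1 + C 4 * X 0 ^ 4 * X 1 ^ 0
  + C 1 * X 0 ^ 4 * X 1 ^ 1 + C 1 * X 0 ^ 5 * X 1 ^ 0

lemma map_g7_eq : MvPolynomial.map (algebraMap ℚ Qbar) g7 = G := by
  rw [g7_eq, G]
  simp only [map_add, map_sub, map_mul, map_pow, map_one, map_ofNat, map_X, map_neg,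
    MvPolynomial.C_1, pow_zero, pow_one, one_mul, mul_one]
  ring

lemma G_coeff : G.coeff (Finsupp.single 0 5) = 1 := by
  simp only [G, coeff_add, X_pow_eq_monomial, C_apply, monomial_mul, coeff_monomial,
    one_mul, mul_one, zero_add, add_zero]
  norm_num [Finsupp.ext_iff, Fin.forall_fin_two, Finsupp.add_apply, Finsupp.single_apply]

lemma G_td : G.totalDegree = 5 := by
  refine le_antisymm ?_ ?_
  · have H : ∀ p q : MvPolynomial (Fin 2) Qbar, p.totalDegree ≤ 5 → q.totalDegree ≤ 5 →
        (p + q).totalDegree ≤ 5 :=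
      fun p q hp hq => le_trans (totalDegree_add p q) (max_le hp hq)
    have T : ∀ (c : Qbar) (i j : ℕ), i + j ≤ 5 →
        (C c * X 0 ^ i * X 1 ^ j : MvPolynomial (Fin 2) Qbar).totalDegree ≤ 5 := by
      intro c i j hij
      refine le_trans (totalDegree_mul _ _) ?_
      refine le_trans (add_le_add (totalDegree_mul _ _) (totalDegree_X_pow _ _).le) ?_
      simp only [totalDegree_C, totalDegree_X_pow, zero_add]
      omega
    rw [G]
    repeat' apply H
    all_goals apply T; norm_num
  · have h := le_totalDegree (p := G) (s := Finsupp.single 0 5)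
      (by rw [mem_support_iff, G_coeff]; norm_num)
    simpa using h

noncomputable def pA : Polynomial Qbar :=
  .X^5 + 4*.X^4 + 2*.X^3 - 5*.X^2 - 2*.X + 1

noncomputable def pB : Polynomial Qbar :=
  .X^4 + 4*.X^3 + 3*.X^2 - 2*.X - 1

lemma pB_ne : pB ≠ 0 := by
  intro h
  have : pB.eval 0 = -1 := by simp [pB]
  rw [h] at this; simp at this

lemma bez : (1 - .X - 3*.X^2 - .X^3 : Polynomial Qbar) * pA
    + (-3*.X + 3*.X^3 + .X^4) * pB = 1 := by
  simp only [pA, pB]; ring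

lemma unit_of_dvd {c : Polynomial Qbar} (hA : c ∣ pA) (hB : c ∣ pB) : IsUnit c := by
  refine isUnit_of_dvd_one ?_
  rw [← bez]
  exact dvd_add (hA.mul_left _) (hB.mul_left _)

lemma irr_p : Irreducible (Polynomial.C pB * Polynomial.X + Polynomial.C pA) := by
  set p := Polynomial.C pB * Polynomial.X + Polynomial.C pA with hp
  have hdeg : p.degree = 1 := Polynomial.degree_linear pB_ne
  have hnd : p.natDegree = 1 := Polynomial.natDegree_linear pB_ne
  have hpne : p ≠ 0 := fun h => by simp [h] at hdeg
  have key : ∀ c : Polynomial Qbar, Polynomial.C c ∣ p → IsUnit c := by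
    intro c hc
    rw [Polynomial.C_dvd_iff_dvd_coeff] at hc
    have h1 := hc 1
    have h0 := hc 0
    simp [hp] at h1 h0
    exact unit_of_dvd h0 h1
  constructor
  · intro h
    have := Polynomial.degree_eq_zero_of_isUnit h
    rw [hdeg] at this; exact one_ne_zero this
  · intro a b hab
    have ha : a ≠ 0 := fun h => hpne (by rw [hab, h, zero_mul])
    have hb : b ≠ 0 := fun h => hpne (by rw [hab, h, mul_zero])
    have hnd' : a.natDegree + b.natDegree = 1 := by
      rw [← Polynomial.natDegree_mul ha hb, ← hab, hnd]
    rcases Nat.eq_zero_or_pos a.natDegree with h | h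
    · left
      obtain ⟨c, rfl⟩ := Polynomial.natDegree_eq_zero.mp h
      exact Polynomial.isUnit_C.mpr (key c ⟨b, hab⟩)
    · right
      have hb0 : b.natDegree = 0 := by omega
      obtain ⟨c, rfl⟩ := Polynomial.natDegree_eq_zero.mp hb0
      exact Polynomial.isUnit_C.mpr (key c ⟨a, by rw [hab, mul_comm]⟩)

/-- The algebra isomorphism `Qbar[X 0, X 1] ≃ (Qbar[λ])[b]` sending `X 1` (the variable `b`)
to the outer variable and `X 0` (the variable `λ`) to the inner one. -/
noncomputable def e7 : MvPolynomial (Fin 2) Qbar ≃ₐ[Qbar] Polynomial (Polynomial Qbar) :=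
  (renameEquiv Qbar (Equiv.swap 0 1)).trans <|
    (finSuccEquiv Qbar 1).trans <|
      Polynomial.mapAlgEquiv <|
        ((renameEquiv Qbar (Equiv.equivPUnit.{1} (Fin 1))) :
            MvPolynomial (Fin 1) Qbar ≃ₐ[Qbar] MvPolynomial PUnit.{1} Qbar).trans
          ((pUnitAlgEquiv Qbar) : MvPolynomial PUnit.{1} Qbar ≃ₐ[Qbar] Polynomial Qbar)

lemma e7_X0 : e7 (X 0) = Polynomial.C Polynomial.X := by
  have hs : (Equiv.swap (0:Fin 2) 1) 0 = Fin.succ 0 := by decide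
  simp only [e7, AlgEquiv.trans_apply, renameEquiv_apply, rename_X, hs]
  rw [finSuccEquiv_X_succ]
  simp

lemma e7_X1 : e7 (X 1) = Polynomial.X := by
  have : (Equiv.swap (0:Fin 2) 1) 1 = 0 := by decide
  simp [e7, this, finSuccEquiv_X_zero]

lemma e7_C (c : Qbar) : e7 (C c) = Polynomial.C (Polynomial.C c) := by
  have h := e7.commutes c
  simpa [algebraMap_eq, Polynomial.algebraMap_apply] using h

lemma e7_G : e7 G = Polynomial.C pB * Polynomial.X + Polynomial.C pA := by
  rw [G]
  simp only [map_add, map_mul, map_pow, e7_X0, e7_X1, e7_C]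
  rw [pA, pB]
  simp only [map_add, map_sub, map_mul, map_pow, map_one, map_ofNat, map_neg,
    Polynomial.C_1]
  ring

/-- The polynomial `g(λ, b₁₁) = det(λ·Id₅ + M(b₁₁, 1))` is absolutely irreducible of total
degree five, i.e. irreducible of total degree five over the algebraic closure `ℚ̄`. -/
theorem g7_absolutely_irreducible :
    Irreducible (MvPolynomial.map (algebraMap ℚ Qbar) g7) ∧
      (MvPolynomial.map (algebraMap ℚ Qbar) g7).totalDegree = 5 := by
  rw [map_g7_eq]
  refine ⟨?_, G_td⟩
  have : Irreducible (e7 G) := by rw [e7_G]; exact irr_p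
  exact (MulEquiv.irreducible_iff (e7 : MvPolynomial (Fin 2) Qbar ≃ₐ[Qbar] _)).mp this
end

section
/- Let B be the generic symmetric 5×5 matrix with entries b_ij (1 ≤ i ≤ j ≤ 5). Then det(λ·Id_5 + B), regarded as a polynomial in the 16 variables λ and (b_ij)_{1 ≤ i ≤ j ≤ 5}, is irreducible over the algebraic closure ℚ̄ of ℚ. -/
open MvPolynomial

/-- Index set for the 15 entries `b_ij`, `1 ≤ i ≤ j ≤ 5`, of a generic symmetric
`5×5` matrix (0-based indices). -/
def Sym5 : Type := {p : Fin 5 × Fin 5 // p.1 ≤ p.2}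

/-- The 16 variables: `none` is `λ`, `some p` is the entry `b_p`. -/
def Var16 : Type := Option Sym5

/-- The `(i,j)` entry of the generic symmetric `5×5` matrix, as a variable. -/
noncomputable def bVar (i j : Fin 5) : MvPolynomial Var16 Qbar :=
  if h : i ≤ j then X (some ⟨(i, j), h⟩) else X (some ⟨(j, i), le_of_not_ge h⟩)

/-- `det(λ·Id₅ + B)` as a polynomial in the 16 variables `λ` and `(b_ij)_{1 ≤ i ≤ j ≤ 5}`. -/
noncomputable def detIdGeneric : MvPolynomial Var16 Qbar :=
  Matrix.det
    ((X none : MvPolynomial Var16 Qbar) • (1 : Matrix (Fin 5) (Fin 5) (MvPolynomial Var16 Qbar)) +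
      Matrix.of fun i j => bVar i j)

/-! ### Auxiliary machinery -/

namespace DetIdAux

/-- The symmetrized index. -/
def symIdx (i j : Fin 5) : Sym5 :=
  if h : i ≤ j then ⟨(i, j), h⟩ else ⟨(j, i), le_of_not_ge h⟩

lemma bVar_eq (i j : Fin 5) : bVar i j = X (some (symIdx i j)) := by
  unfold bVar symIdx
  split <;> rename_i h <;> simp [h] <;> rfl

/-! #### The swap automorphism of `R[X][X]` -/

variable {R : Type*} [CommRing R]

noncomputable def swapHom : Polynomial (Polynomial R) →+* Polynomial (Polynomial R) :=
  Polynomial.eval₂RingHom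
    (Polynomial.eval₂RingHom (Polynomial.C.comp Polynomial.C) Polynomial.X)
    (Polynomial.C Polynomial.X)

lemma swapHom_involutive : (swapHom (R := R)).comp swapHom = RingHom.id _ := by
  apply Polynomial.ringHom_ext'
  · apply Polynomial.ringHom_ext'
    · ext a
      simp [swapHom]
    · simp [swapHom]
  · simp [swapHom]

noncomputable def swapEquiv : Polynomial (Polynomial R) ≃+* Polynomial (Polynomial R) :=
  RingEquiv.ofRingHom swapHom swapHom swapHom_involutive swapHom_involutive

/-! #### Two general irreducibility lemmas -/

/-- If `F` is monic and its image under a coefficient ring hom is irreducible, `F` is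
irreducible. -/
lemma irreducible_of_irreducible_map_monic {R S : Type*} [CommRing R] [IsDomain R]
    [CommRing S] [IsDomain S] (σ : R →+* S) {F : Polynomial R} (hF : F.Monic)
    (h : Irreducible (F.map σ)) : Irreducible F := by
  constructor
  · intro hu
    exact h.not_isUnit (hu.map (Polynomial.mapRingHom σ))
  · intro g k hgk
    by_contra hc
    push_neg at hc
    obtain ⟨hg, hk⟩ := hc
    have hlead : g.leadingCoeff * k.leadingCoeff = 1 := by
      have := hF.leadingCoeff
      rw [hgk, Polynomial.leadingCoeff_mul] at this
      exact this
    have hgu : IsUnit g.leadingCoeff := IsUnit.of_mul_eq_one _ hlead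
    have hku : IsUnit k.leadingCoeff :=
      IsUnit.of_mul_eq_one _ (by rw [mul_comm] at hlead; exact hlead)
    have hgd : 0 < g.natDegree := by
      rcases Nat.eq_zero_or_pos g.natDegree with h0 | h0
      · exact absurd ((Polynomial.eq_C_of_natDegree_eq_zero h0) ▸ Polynomial.isUnit_C.2
          (by rwa [Polynomial.leadingCoeff, h0] at hgu)) hg
      · exact h0
    have hkd : 0 < k.natDegree := by
      rcases Nat.eq_zero_or_pos k.natDegree with h0 | h0
      · exact absurd ((Polynomial.eq_C_of_natDegree_eq_zero h0) ▸ Polynomial.isUnit_C.2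
          (by rwa [Polynomial.leadingCoeff, h0] at hku)) hk
      · exact h0
    have hgs : (g.map σ).natDegree = g.natDegree :=
      Polynomial.natDegree_map_of_leadingCoeff_ne_zero σ (hgu.map σ).ne_zero
    have hks : (k.map σ).natDegree = k.natDegree :=
      Polynomial.natDegree_map_of_leadingCoeff_ne_zero σ (hku.map σ).ne_zero
    have hmap : F.map σ = g.map σ * k.map σ := by rw [hgk, Polynomial.map_mul]
    rcases h.isUnit_or_isUnit hmap with hu | hu
    · exact Polynomial.not_isUnit_of_natDegree_pos _ (hgs ▸ hgd) hu
    · exact Polynomial.not_isUnit_of_natDegree_pos _ (hks ▸ hkd) hu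

/-- A linear polynomial with coprime coefficients over a domain is irreducible. -/
lemma irreducible_linear_of_isCoprime {R : Type*} [CommRing R] [IsDomain R]
    {a b : R} (hb : b ≠ 0) (hab : IsCoprime a b) :
    Irreducible (Polynomial.C b * Polynomial.X + Polynomial.C a) := by
  have hdeg : (Polynomial.C b * Polynomial.X + Polynomial.C a).natDegree = 1 :=
    Polynomial.natDegree_linear hb
  constructor
  · intro hu
    have := Polynomial.natDegree_eq_zero_of_isUnit hu
    omega
  · intro g k hgk
    have hne : Polynomial.C b * Polynomial.X + Polynomial.C a ≠ 0 := fun h => by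
      simp [h] at hdeg
    have hg0 : g ≠ 0 := fun h => hne (by rw [hgk, h, zero_mul])
    have hk0 : k ≠ 0 := fun h => hne (by rw [hgk, h, mul_zero])
    have hsum : g.natDegree + k.natDegree = 1 := by
      rw [← Polynomial.natDegree_mul hg0 hk0, ← hgk, hdeg]
    have key : ∀ p q : Polynomial R,
        Polynomial.C b * Polynomial.X + Polynomial.C a = p * q → p.natDegree = 0 →
        IsUnit p := by
      intro p q hpq hp0
      obtain ⟨c, rfl⟩ : ∃ c, p = Polynomial.C c :=
        ⟨p.coeff 0, Polynomial.eq_C_of_natDegree_eq_zero hp0⟩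
      have ha : a = c * q.coeff 0 := by
        have := congrArg (fun r => Polynomial.coeff r 0) hpq
        simpa [Polynomial.coeff_C] using this
      have hbq : b = c * q.coeff 1 := by
        have := congrArg (fun r => Polynomial.coeff r 1) hpq
        simpa [Polynomial.coeff_C] using this
      obtain ⟨u, v, huv⟩ := hab
      have : c * (u * q.coeff 0 + v * q.coeff 1) = 1 := by
        rw [← huv, ha, hbq]; ring
      exact Polynomial.isUnit_C.2 (IsUnit.of_mul_eq_one _ this)
    rcases Nat.eq_zero_or_pos g.natDegree with h0 | h0
    · exact Or.inl (key g k hgk h0)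
    · exact Or.inr (key k g (by rw [hgk, mul_comm]) (by omega))

/-! #### The specific data -/

/-- The matrix of generic variables, negated. -/
noncomputable def N : Matrix (Fin 5) (Fin 5) (MvPolynomial Sym5 Qbar) :=
  -(Matrix.of fun i j => X (symIdx i j))

/-- The specialized symmetric matrix over `Qbar[X]`. -/
noncomputable def Wmat : Matrix (Fin 5) (Fin 5) (Polynomial Qbar) :=
  !![Polynomial.X,1,0,0,0; 1,0,1,0,0; 0,1,0,1,0; 0,0,1,0,1; 0,0,0,1,0]

/-- The specialization map on variables. -/
noncomputable def vspec : Sym5 → Polynomial Qbar := fun p => -(Wmat p.1.1 p.1.2)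

noncomputable def σspec : MvPolynomial Sym5 Qbar →+* Polynomial Qbar :=
  (MvPolynomial.aeval vspec).toRingHom

lemma N_map_σspec : N.map σspec = Wmat := by
  refine Matrix.ext fun i j => ?_
  simp only [N, Matrix.map_apply, Matrix.neg_apply, Matrix.of_apply, map_neg, σspec,
    AlgHom.toRingHom_eq_coe, RingHom.coe_coe, aeval_X]
  fin_cases i <;> fin_cases j <;> simp [vspec, symIdx, Wmat, Matrix.vecHead, Matrix.vecTail]

set_option maxHeartbeats 1000000 in
lemma charpoly_Wmat : Wmat.charpoly =
    Polynomial.X^5 - 4*Polynomial.X^3 + 3*Polynomial.X -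
      Polynomial.C Polynomial.X *
        (Polynomial.X^4 - 3*Polynomial.X^2 + 1) := by
  rw [Matrix.charpoly]
  simp [Matrix.charmatrix_apply, Wmat, Matrix.det_succ_row_zero, Fin.sum_univ_succ, Matrix.submatrix_apply, Matrix.diagonal_apply, Fin.succAbove_zero, Fin.succAbove]
  ring

/-- The bivariate polynomial, written with the deformation variable outermost. -/
noncomputable def fsrc : Polynomial (Polynomial Qbar) :=
  Polynomial.C (-(Polynomial.X^4 - 3*Polynomial.X^2 + 1)) * Polynomial.X +
    Polynomial.C (Polynomial.X^5 - 4*Polynomial.X^3 + 3*Polynomial.X)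

lemma swapHom_fsrc : swapHom fsrc =
    Polynomial.X^5 - 4*Polynomial.X^3 + 3*Polynomial.X -
      Polynomial.C Polynomial.X *
        (Polynomial.X^4 - 3*Polynomial.X^2 + 1) := by
  simp only [fsrc, swapHom, Polynomial.coe_eval₂RingHom, Polynomial.eval₂_add,
    Polynomial.eval₂_mul, Polynomial.eval₂_X, Polynomial.eval₂_C, Polynomial.eval₂_sub,
    Polynomial.eval₂_neg, Polynomial.eval₂_pow, Polynomial.eval₂_ofNat, map_ofNat, map_sub,
    map_neg, map_add, map_mul, map_pow, map_one, RingHom.coe_comp, Function.comp_apply]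
  ring

lemma irreducible_fsrc : Irreducible fsrc := by
  rw [fsrc]
  apply irreducible_linear_of_isCoprime
  · intro h
    have := congrArg (fun p => Polynomial.coeff p 0) h
    simp at this
  · exact ⟨2*Polynomial.X - Polynomial.X^3, -(Polynomial.X^4 - 3*Polynomial.X^2 + 1), by ring⟩

end DetIdAux

set_option maxHeartbeats 1000000 in
set_option maxRecDepth 8000 in
open DetIdAux in
/-- `det(λ·Id₅ + B)`, regarded as a polynomial in the 16 variables `λ` and
`(b_ij)_{1 ≤ i ≤ j ≤ 5}`, is irreducible over `ℚ̄`. -/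
theorem detIdGeneric_absolutely_irreducible : Irreducible detIdGeneric := by
  classical
  have hA : (optionEquivLeft Qbar Sym5).toAlgHom.toRingHom detIdGeneric = N.charpoly := by
    rw [detIdGeneric]
    refine (RingHom.map_det _ _).trans ?_
    rw [Matrix.charpoly]
    congr 1
    refine Matrix.ext fun i j => ?_
    erw [RingHom.mapMatrix_apply]
    rcases eq_or_ne i j with rfl | hij
    · erw [Matrix.map_apply, Matrix.charmatrix_apply_eq]
      simp [Matrix.add_apply, Matrix.smul_apply, Matrix.one_apply_eq, smul_eq_mul,
        bVar_eq, N, sub_neg_eq_add, AlgEquiv.toAlgHom_eq_coe, AlgHom.toRingHom_eq_coe,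
        RingHom.coe_coe, AlgHom.coe_coe, optionEquivLeft_X_none, optionEquivLeft_X_some,
        MvPolynomial.aeval_X, Option.elim]
      erw [Matrix.of_apply, map_add, optionEquivLeft_X_none, optionEquivLeft_X_some]
    · erw [Matrix.map_apply, Matrix.charmatrix_apply_ne _ _ _ hij]
      simp [Matrix.add_apply, Matrix.smul_apply, Matrix.one_apply_ne hij, smul_eq_mul,
        bVar_eq, N, AlgEquiv.toAlgHom_eq_coe, AlgHom.toRingHom_eq_coe,
        RingHom.coe_coe, AlgHom.coe_coe, optionEquivLeft_X_some,
        MvPolynomial.aeval_X, Option.elim]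
      erw [Matrix.of_apply, optionEquivLeft_X_some]
  have hmono : N.charpoly.Monic := Matrix.charpoly_monic N
  have hmap : N.charpoly.map σspec = Wmat.charpoly := by
    rw [← Matrix.charpoly_map, N_map_σspec]
  have h1 : Irreducible Wmat.charpoly := by
    rw [charpoly_Wmat, ← swapHom_fsrc]
    have hse : swapHom (R := Qbar) fsrc = swapEquiv fsrc := rfl
    rw [hse]
    exact (MulEquiv.irreducible_iff
      (swapEquiv : Polynomial (Polynomial Qbar) ≃+* _)).2 irreducible_fsrc
  have h2 : Irreducible N.charpoly :=
    irreducible_of_irreducible_map_monic σspec hmono (by rw [hmap]; exact h1)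
  have h3 : Irreducible ((optionEquivLeft Qbar Sym5) detIdGeneric) := by
    have hco : (optionEquivLeft Qbar Sym5) detIdGeneric =
        (optionEquivLeft Qbar Sym5).toAlgHom.toRingHom detIdGeneric := rfl
    rw [hco, hA]; exact h2
  exact (MulEquiv.irreducible_iff (optionEquivLeft Qbar Sym5)).1 h3
end

section
/- Let A be a symmetric 5×5 matrix with rational entries and det(A) ≠ 0, and let B be the generic symmetric 5×5 matrix with entries b_ij (1 ≤ i ≤ j ≤ 5). Then det(λ·A + B), regarded as a polynomial in the 16 variables λ and (b_ij)_{1 ≤ i ≤ j ≤ 5}, is irreducible over the algebraic closure ℚ̄ of ℚ. -/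
open MvPolynomial

/-- `det(λ·A + B)` as a polynomial in the 16 variables `λ` and `(b_ij)_{1 ≤ i ≤ j ≤ 5}`,
for a fixed rational matrix `A`. -/
noncomputable def detAGeneric (A : Matrix (Fin 5) (Fin 5) ℚ) : MvPolynomial Var16 Qbar :=
  Matrix.det
    (Matrix.of fun i j =>
      (X none : MvPolynomial Var16 Qbar) * C (algebraMap ℚ Qbar (A i j)) + bVar i j)


/-- A linear polynomial `g·x + h` over a domain, with `g` prime not dividing `h`,
is irreducible. -/
theorem linear_irreducible {R : Type*} [CommRing R] [IsDomain R] {g h : R}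
    (hg : Prime g) (hndvd : ¬ g ∣ h) :
    Irreducible (Polynomial.C g * Polynomial.X + Polynomial.C h) := by
  have hg0 : g ≠ 0 := hg.ne_zero
  have hdeg : (Polynomial.C g * Polynomial.X + Polynomial.C h).degree = 1 := Polynomial.degree_linear hg0
  have hp0 : (Polynomial.C g * Polynomial.X + Polynomial.C h) ≠ 0 := fun h0 => by rw [h0] at hdeg; simp at hdeg
  have hkey : ∀ c : R, c ∣ g → c ∣ h → IsUnit c := by
    intro c hcg hch
    obtain ⟨d, rfl⟩ := hcg
    rcases hg.irreducible.isUnit_or_isUnit rfl with hc | hd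
    · exact hc
    · exfalso
      apply hndvd
      have : c = c * d * ↑hd.unit⁻¹ := by
        rw [mul_assoc]
        simp [IsUnit.unit_spec]
      exact dvd_trans (Dvd.intro _ this.symm) hch
  have haux : ∀ a b : Polynomial R, Polynomial.C g * Polynomial.X + Polynomial.C h = a * b → a.natDegree = 0 → IsUnit a := by
    intro a b hab ha
    obtain ⟨c, rfl⟩ := Polynomial.natDegree_eq_zero.mp ha
    have hcg : c ∣ g := by
      have := congrArg (fun p => p.coeff 1) hab
      simp [Polynomial.coeff_C_mul] at this
      exact ⟨b.coeff 1, this⟩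
    have hch : c ∣ h := by
      have := congrArg (fun p => p.coeff 0) hab
      simp [Polynomial.coeff_C_mul] at this
      exact ⟨b.coeff 0, this⟩
    exact Polynomial.isUnit_C.mpr (hkey c hcg hch)
  constructor
  · intro hu
    rw [Polynomial.degree_eq_zero_of_isUnit hu] at hdeg
    simp at hdeg
  · intro a b hab
    have ha0 : a ≠ 0 := fun h0 => hp0 (by simp [hab, h0])
    have hb0 : b ≠ 0 := fun h0 => hp0 (by simp [hab, h0])
    have hnd : a.natDegree + b.natDegree = 1 := by
      rw [← Polynomial.natDegree_mul ha0 hb0, ← hab]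
      have := Polynomial.natDegree_eq_of_degree_eq_some hdeg
      exact this
    rcases Nat.eq_zero_or_pos a.natDegree with ha | ha
    · exact Or.inl (haux a b hab ha)
    · exact Or.inr (haux b a (by rw [hab, mul_comm]) (by omega))

theorem det_corner_linear {R : Type*} [CommRing R] (n : ℕ)
    (N : Matrix (Fin (n+1)) (Fin (n+1)) R) (hN : N 0 0 = 0) :
    Matrix.det (Matrix.of fun i j =>
        (if i = 0 ∧ j = 0 then Polynomial.X else 0) + Polynomial.C (N i j))
      = Polynomial.X * Polynomial.C (Matrix.det (N.submatrix Fin.succ Fin.succ))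
        + Polynomial.C (Matrix.det N) := by
  set M : Matrix (Fin (n+1)) (Fin (n+1)) (Polynomial R) :=
    Matrix.of fun i j => (if i = 0 ∧ j = 0 then Polynomial.X else 0) + Polynomial.C (N i j) with hM
  have hsub : ∀ w : Fin n → Fin (n+1), M.submatrix Fin.succ w = (N.submatrix Fin.succ w).map Polynomial.C := by
    intro w
    ext i j
    simp [hM, Matrix.submatrix_apply, Matrix.map_apply, Fin.succ_ne_zero i]
  have hdetsub : ∀ w : Fin n → Fin (n+1),
      (M.submatrix Fin.succ w).det = Polynomial.C ((N.submatrix Fin.succ w).det) := by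
    intro w
    rw [hsub w, ← RingHom.mapMatrix_apply, ← RingHom.map_det]
  rw [Matrix.det_succ_row_zero]
  have hNdet : N.det = ∑ j : Fin n, (-1) ^ ((j.succ : ℕ)) * N 0 j.succ * (N.submatrix Fin.succ j.succ.succAbove).det := by
    rw [Matrix.det_succ_row_zero, Fin.sum_univ_succ]
    simp [hN]
  rw [Fin.sum_univ_succ]
  have h00 : M 0 0 = Polynomial.X := by simp [hM, hN]
  rw [h00, hdetsub]
  have hrest : ∀ j : Fin n, M 0 j.succ = Polynomial.C (N 0 j.succ) := by
    intro j
    simp [hM, (Fin.succ_ne_zero j).symm, Fin.succ_ne_zero j]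
  have : ∑ j : Fin n, (-1) ^ ((j.succ : Fin (n+1)) : ℕ) * M 0 j.succ * (M.submatrix Fin.succ (j.succ : Fin (n+1)).succAbove).det
      = Polynomial.C N.det := by
    rw [hNdet, map_sum]
    refine Finset.sum_congr rfl fun j _ => ?_
    rw [hrest j, hdetsub, map_mul, map_mul, map_pow, map_neg, map_one]
    try ring
  rw [this, Fin.succAbove_zero]
  simp

theorem mv_X_irreducible {K : Type*} [Field K] {σ : Type} (s : σ) :
    Irreducible (X s : MvPolynomial σ K) := by
  classical
  let e : Option {t : σ // t ≠ s} ≃ σ := Equiv.optionSubtypeNe s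
  have h1 : (renameEquiv K e) (X none) = X s := by simp [renameEquiv_apply, rename_X, e]
  rw [← h1, MulEquiv.irreducible_iff (renameEquiv K e)]
  rw [← MulEquiv.irreducible_iff (optionEquivLeft K {t : σ // t ≠ s})]
  show Irreducible ((optionEquivLeft K _) (X none))
  rw [optionEquivLeft_X_none]
  exact Polynomial.irreducible_X

/-- The determinant of a generic symmetric matrix of variables is irreducible. -/
theorem genSymDet_irreducible (K : Type*) [Field K] :
    ∀ (n : ℕ) {σ : Type} (v : Fin (n+1) → Fin (n+1) → σ)
    (_ : ∀ i j, v i j = v j i)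
    (_ : ∀ i j k l, v i j = v k l → (i = k ∧ j = l) ∨ (i = l ∧ j = k)),
    Irreducible (Matrix.det (Matrix.of fun i j => (X (v i j) : MvPolynomial σ K))) := by
  intro n
  induction n with
  | zero =>
    intro σ v _ _
    have : Matrix.det (Matrix.of fun i j => (X (v i j) : MvPolynomial σ K)) = X (v 0 0) :=
      Matrix.det_fin_one _
    rw [this]
    exact mv_X_irreducible _
  | succ n IH =>
    intro σ v hsymm hinj
    classical
    set c := v 0 0 with hc
    set σ' := {s : σ // s ≠ c} with hσ'
    set e : Option σ' ≃ σ := Equiv.optionSubtypeNe c with he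
    -- variables avoiding the corner
    have hvne : ∀ i j : Fin (n+2), ¬(i = 0 ∧ j = 0) → v i j ≠ c := by
      intro i j hij hvc
      rcases hinj i j 0 0 hvc with ⟨h1, h2⟩ | ⟨h1, h2⟩ <;> exact hij ⟨h1, h2⟩
    set u : Fin (n+2) → Fin (n+2) → Option σ' := fun i j =>
      if h : v i j = c then none else some ⟨v i j, h⟩ with hu
    have heu : ∀ i j, e (u i j) = v i j := by
      intro i j
      by_cases h : v i j = c
      · rw [hu]; simp only [h, dif_pos]; rw [he, Equiv.optionSubtypeNe_none]
      · rw [hu]; simp only [h, dif_neg, not_false_iff]; rw [he, Equiv.optionSubtypeNe_some]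
    set N : Matrix (Fin (n+2)) (Fin (n+2)) (MvPolynomial σ' K) :=
      Matrix.of (fun i j => if h : v i j = c then 0 else X ⟨v i j, h⟩) with hNdef
    have hN00 : N 0 0 = 0 := by simp [hNdef, hc]
    -- transfer along renameEquiv
    have key : (renameEquiv K e) (Matrix.det (Matrix.of fun i j => (X (u i j) : MvPolynomial (Option σ') K)))
        = Matrix.det (Matrix.of fun i j => (X (v i j) : MvPolynomial σ K)) := by
      rw [AlgEquiv.map_det]
      congr 1
      ext i j
      simp [Matrix.map_apply, renameEquiv_apply, rename_X, heu]
    rw [← key, MulEquiv.irreducible_iff (renameEquiv K e)]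
    rw [← MulEquiv.irreducible_iff (optionEquivLeft K σ')]
    have hmap : (optionEquivLeft K σ') (Matrix.det (Matrix.of fun i j => (X (u i j) : MvPolynomial (Option σ') K)))
        = Polynomial.X * Polynomial.C (Matrix.det (N.submatrix Fin.succ Fin.succ))
          + Polynomial.C (Matrix.det N) := by
      rw [AlgEquiv.map_det, AlgEquiv.mapMatrix_apply]
      rw [show ((Matrix.of fun i j => (X (u i j) : MvPolynomial (Option σ') K)).map (optionEquivLeft K σ'))
          = Matrix.of fun i j => (if i = 0 ∧ j = 0 then Polynomial.X else 0) + Polynomial.C (N i j) from ?_]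
      · exact det_corner_linear (n+1) N hN00
      · ext i j
        by_cases hij : i = 0 ∧ j = 0
        · obtain ⟨rfl, rfl⟩ := hij
          simp [Matrix.map_apply, hu, hNdef, hc, optionEquivLeft_X_none]
        · have h := hvne i j hij
          simp [Matrix.map_apply, hu, hNdef, h, optionEquivLeft_X_some, hij]
    rw [hmap]
    -- the minor as a generic symmetric determinant
    have hsuccne : ∀ i j : Fin (n+1), v i.succ j.succ ≠ c :=
      fun i j => hvne _ _ (fun hh => Fin.succ_ne_zero i hh.1)
    set v' : Fin (n+1) → Fin (n+1) → σ' := fun i j => ⟨v i.succ j.succ, hsuccne i j⟩ with hv'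
    have hminor : N.submatrix Fin.succ Fin.succ
        = Matrix.of fun i j => (X (v' i j) : MvPolynomial σ' K) := by
      ext i j
      rw [Matrix.submatrix_apply, hNdef, hv']
      simp only [Matrix.of_apply]
      rw [dif_neg (hsuccne i j)]
    have hg_irr : Irreducible (Matrix.det (N.submatrix Fin.succ Fin.succ)) := by
      rw [hminor]
      exact IH v'
        (fun i j => Subtype.ext (hsymm i.succ j.succ))
        (fun i j k l hvv => by
          have := hinj i.succ j.succ k.succ l.succ (congrArg Subtype.val hvv)
          rcases this with ⟨h1, h2⟩ | ⟨h1, h2⟩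
          · exact Or.inl ⟨Fin.succ_injective _ h1, Fin.succ_injective _ h2⟩
          · exact Or.inr ⟨Fin.succ_injective _ h1, Fin.succ_injective _ h2⟩)
    have hg_prime : Prime (Matrix.det (N.submatrix Fin.succ Fin.succ)) :=
      (UniqueFactorizationMonoid.irreducible_iff_prime).mp hg_irr
    -- the evaluation showing non-divisibility
    have hndvd : ¬ (Matrix.det (N.submatrix Fin.succ Fin.succ)) ∣ Matrix.det N := by
      have e01 : (0 : Fin (n+2)) ≠ 1 := by simp [Fin.ext_iff]
      have hval1 : ((1 : Fin (n+2)) : ℕ) = 1 := by simp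
      set w : σ' → K := fun s =>
        if (∃ k : Fin (n+2), 2 ≤ (k : ℕ) ∧ v k k = s.val) ∨ s.val = v 0 1 then 1 else 0 with hw
      have hvalv' : ∀ i j : Fin (n+1), (v' i j).val = v i.succ j.succ := fun _ _ => rfl
      -- evaluation of the minor is a singular diagonal matrix
      have hdetg : (eval w) (Matrix.det (N.submatrix Fin.succ Fin.succ)) = 0 := by
        rw [hminor, RingHom.map_det, RingHom.mapMatrix_apply]
        have hdiag : (Matrix.of fun i j => (X (v' i j) : MvPolynomial σ' K)).map (eval w)
            = Matrix.diagonal (fun i : Fin (n+1) => if i = 0 then (0:K) else 1) := by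
          ext i j
          rw [Matrix.map_apply]
          simp only [Matrix.of_apply, eval_X]
          rw [hw]
          simp only [hvalv']
          by_cases hij : i = j
          · subst hij
            by_cases hi0 : i = 0
            · subst hi0
              rw [Matrix.diagonal_apply_eq, if_pos rfl, if_neg]
              rintro (⟨k, hk2, hkv⟩ | hv01)
              · rcases hinj k k (0:Fin (n+1)).succ (0:Fin (n+1)).succ hkv with ⟨rfl, -⟩ | ⟨rfl, -⟩ <;>
                  simp [Fin.val_succ] at hk2
              · rcases hinj _ _ 0 1 hv01 with ⟨h1, -⟩ | ⟨-, h2⟩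
                · exact Fin.succ_ne_zero _ h1
                · exact Fin.succ_ne_zero _ h2
            · rw [Matrix.diagonal_apply_eq, if_neg hi0, if_pos]
              left
              refine ⟨i.succ, ?_, rfl⟩
              have h0 : (i : ℕ) ≠ 0 := fun hh => hi0 (Fin.ext (by simp [hh]))
              rw [Fin.val_succ]
              omega
          · rw [Matrix.diagonal_apply_ne _ hij, if_neg]
            rintro (⟨k, hk2, hkv⟩ | hv01)
            · rcases hinj k k i.succ j.succ hkv with ⟨rfl, h2⟩ | ⟨rfl, h2⟩
              · exact hij (Fin.succ_injective _ h2)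
              · exact hij (Fin.succ_injective _ h2.symm)
            · rcases hinj i.succ j.succ 0 1 hv01 with ⟨h1, -⟩ | ⟨-, h2⟩
              · exact Fin.succ_ne_zero _ h1
              · exact Fin.succ_ne_zero _ h2
        rw [hdiag, Matrix.det_diagonal]
        exact Finset.prod_eq_zero (Finset.mem_univ 0) (by simp)
      -- evaluation of the full matrix is a transposition matrix
      have hdeth : (eval w) (Matrix.det N) = -1 := by
        rw [RingHom.map_det, RingHom.mapMatrix_apply]
        have hNeval : N.map (eval w) = (Equiv.swap (0 : Fin (n+2)) 1).permMatrix K := by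
          ext i j
          rw [Matrix.map_apply, hNdef]
          simp only [Matrix.of_apply]
          have hperm : (Equiv.swap (0 : Fin (n+2)) 1).permMatrix K i j
              = if Equiv.swap (0 : Fin (n+2)) 1 i = j then 1 else 0 := by
            simp [Equiv.Perm.permMatrix, PEquiv.toMatrix_apply, Equiv.toPEquiv_apply]
          rw [hperm]
          by_cases hc0 : v i j = c
          · rcases hinj i j 0 0 hc0 with ⟨rfl, rfl⟩ | ⟨rfl, rfl⟩ <;>
            · rw [dif_pos hc0, if_neg]
              · simp
              · rw [Equiv.swap_apply_left]
                exact e01.symm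
          · rw [dif_neg hc0]
            rw [eval_X, hw]
            simp only
            have hiff : ((∃ k : Fin (n+2), 2 ≤ (k : ℕ) ∧ v k k = v i j) ∨ v i j = v 0 1)
                ↔ (Equiv.swap (0 : Fin (n+2)) 1 i = j) := by
              constructor
              · rintro (⟨k, hk2, hkv⟩ | hv01)
                · rcases hinj k k i j hkv with ⟨rfl, rfl⟩ | ⟨rfl, rfl⟩ <;>
                  · have hk0 : k ≠ 0 := by
                      intro hh; rw [hh] at hk2; simp at hk2
                    have hk1 : k ≠ 1 := by
                      intro hh; rw [hh] at hk2; rw [hval1] at hk2; omega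
                    rw [Equiv.swap_apply_of_ne_of_ne hk0 hk1]
                · rcases hinj i j 0 1 hv01 with ⟨rfl, rfl⟩ | ⟨rfl, rfl⟩
                  · rw [Equiv.swap_apply_left]
                  · rw [Equiv.swap_apply_right]
              · intro hs
                by_cases hi0 : i = 0
                · subst hi0
                  rw [Equiv.swap_apply_left] at hs
                  subst hs
                  exact Or.inr rfl
                · by_cases hi1 : i = 1
                  · subst hi1
                    rw [Equiv.swap_apply_right] at hs
                    subst hs
                    exact Or.inr (hsymm 1 0)
                  · rw [Equiv.swap_apply_of_ne_of_ne hi0 hi1] at hs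
                    subst hs
                    left
                    refine ⟨i, ?_, rfl⟩
                    have h0 : (i : ℕ) ≠ 0 := fun hh => hi0 (Fin.ext (by simp [hh]))
                    have h1 : (i : ℕ) ≠ 1 := fun hh => hi1 (Fin.ext (by simp [hh, hval1]))
                    omega
            rw [if_congr hiff rfl rfl]
        rw [hNeval, Matrix.det_permutation, Equiv.Perm.sign_swap e01]
        simp
      intro hdvd
      obtain ⟨q, hq⟩ := hdvd
      have heq := congrArg (eval w) hq
      rw [map_mul, hdetg, hdeth, zero_mul] at heq
      simp at heq
    have := linear_irreducible hg_prime hndvd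
    rwa [mul_comm (Polynomial.C _) Polynomial.X] at this

/-- The symmetric variable pattern for the 5×5 generic symmetric matrix. -/
noncomputable def symVar (i j : Fin 5) : Option Sym5 :=
  if h : i ≤ j then some ⟨(i, j), h⟩ else some ⟨(j, i), le_of_not_ge h⟩

theorem symVar_symm (i j : Fin 5) : symVar i j = symVar j i := by
  unfold symVar
  by_cases h1 : i ≤ j <;> by_cases h2 : j ≤ i
  · have : i = j := le_antisymm h1 h2
    subst this
    rfl
  · simp [h1, h2]
  · simp [h1, h2]
  · exact absurd (le_of_not_ge h1) h2

theorem symVar_inj (i j k l : Fin 5) (h : symVar i j = symVar k l) :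
    (i = k ∧ j = l) ∨ (i = l ∧ j = k) := by
  unfold symVar at h
  split_ifs at h <;>
  · have h1 : _ = _ := Option.some.inj h
    have h2 := congrArg Subtype.val h1
    simp only [Prod.mk.injEq] at h2
    tauto

/-- The shear substitution `b ↦ b + λ a`. -/
noncomputable def shearF (A : Matrix (Fin 5) (Fin 5) ℚ) (o : Option Sym5) :
    MvPolynomial (Option Sym5) Qbar :=
  Option.elim o (X none) (fun p => X (some p) + X none * C (algebraMap ℚ Qbar (A p.val.1 p.val.2)))

/-- The inverse shear substitution `b ↦ b - λ a`. -/
noncomputable def shearG (A : Matrix (Fin 5) (Fin 5) ℚ) (o : Option Sym5) :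
    MvPolynomial (Option Sym5) Qbar :=
  Option.elim o (X none) (fun p => X (some p) - X none * C (algebraMap ℚ Qbar (A p.val.1 p.val.2)))

theorem shearF_none (A : Matrix (Fin 5) (Fin 5) ℚ) : shearF A none = X none := rfl
theorem shearG_none (A : Matrix (Fin 5) (Fin 5) ℚ) : shearG A none = X none := rfl
theorem shearF_some (A : Matrix (Fin 5) (Fin 5) ℚ) (p : Sym5) :
    shearF A (some p) = X (some p) + X none * C (algebraMap ℚ Qbar (A p.val.1 p.val.2)) := rfl
theorem shearG_some (A : Matrix (Fin 5) (Fin 5) ℚ) (p : Sym5) :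
    shearG A (some p) = X (some p) - X none * C (algebraMap ℚ Qbar (A p.val.1 p.val.2)) := rfl

set_option maxRecDepth 4000 in
/-- For a symmetric `5×5` rational matrix `A` with `det A ≠ 0`, the polynomial
`det(λ·A + B)`, regarded as a polynomial in the 16 variables `λ` and
`(b_ij)_{1 ≤ i ≤ j ≤ 5}`, is irreducible over `ℚ̄`. -/
theorem detAGeneric_absolutely_irreducible (A : Matrix (Fin 5) (Fin 5) ℚ)
    (hA : A.IsSymm) (hdet : A.det ≠ 0) : Irreducible (detAGeneric A) := by
  have hdetsym : Irreducible
      (Matrix.det (Matrix.of fun i j => (X (symVar i j) : MvPolynomial (Option Sym5) Qbar))) :=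
    genSymDet_irreducible Qbar 4 symVar symVar_symm symVar_inj
  have hφψ : (aeval (shearF A)).comp (aeval (shearG A))
      = AlgHom.id Qbar (MvPolynomial (Option Sym5) Qbar) := by
    apply algHom_ext
    intro o
    cases o with
    | none =>
      rw [AlgHom.comp_apply, AlgHom.id_apply, aeval_X, shearG_none, aeval_X, shearF_none]
    | some p =>
      rw [AlgHom.comp_apply, AlgHom.id_apply, aeval_X, shearG_some, map_sub, map_mul, aeval_X,
        aeval_X, shearF_some, shearF_none, aeval_C, algebraMap_eq]
      ring
  have hψφ : (aeval (shearG A)).comp (aeval (shearF A))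
      = AlgHom.id Qbar (MvPolynomial (Option Sym5) Qbar) := by
    apply algHom_ext
    intro o
    cases o with
    | none =>
      rw [AlgHom.comp_apply, AlgHom.id_apply, aeval_X, shearF_none, aeval_X, shearG_none]
    | some p =>
      rw [AlgHom.comp_apply, AlgHom.id_apply, aeval_X, shearF_some, map_add, map_mul, aeval_X,
        aeval_X, shearG_some, shearG_none, aeval_C, algebraMap_eq]
      ring
  set eqv : MvPolynomial (Option Sym5) Qbar ≃ₐ[Qbar] MvPolynomial (Option Sym5) Qbar :=
    AlgEquiv.ofAlgHom (aeval (shearF A)) (aeval (shearG A)) hφψ hψφ with heqv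
  have key : eqv (Matrix.det (Matrix.of fun i j => (X (symVar i j) : MvPolynomial (Option Sym5) Qbar)))
      = detAGeneric A := by
    show (aeval (shearF A)) _ = _
    rw [AlgHom.map_det, AlgHom.mapMatrix_apply]
    unfold detAGeneric
    refine congrArg Matrix.det ?_
    refine Matrix.ext fun i j => ?_
    rw [Matrix.map_apply]
    simp only [Matrix.of_apply]
    rw [aeval_X]
    unfold symVar bVar
    by_cases h : i ≤ j
    · rw [dif_pos h, dif_pos h]; refine (shearF_some A _).trans ?_
      exact add_comm _ _
    · rw [dif_neg h, dif_neg h]; refine (shearF_some A _).trans ?_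
      rw [hA.apply i j]
      exact add_comm _ _
  rw [← key]; refine (MulEquiv.irreducible_iff eqv).mpr ?_
  exact hdetsym
end
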